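/- The pushforward of twice the Lebesgue measure on ℂ ≅ ℝ² under the map z ↦ (1 + |z|²)^{−1} equals the measure on ℝ given by the density t ↦ 2π·t^{−2} on the open interval (0, 1) and zero outside, with respect to Lebesgue measure. (Lemma 'l:alpha_v'(iii) of the paper: the explicit description of the measure α_v at a complex place.) -/

import Mathlib

open MeasureTheory Real Set
open scoped ENNReal

private def Adisc (d : ℝ) : Set ℂ := {z : ℂ | ‖z‖ ^ 2 < d}

private lemma measurableSet_Adisc (d : ℝ) : MeasurableSet (Adisc d) :=
  (isOpen_lt (by continuity) continuous_const).measurableSet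

private lemma volume_Adisc {d : ℝ} (hd : 0 ≤ d) :
    volume (Adisc d) = ENNReal.ofReal d * NNReal.pi := by
  have h : Adisc d = Metric.ball (0 : ℂ) (Real.sqrt d) := by
    ext z
    simp only [Adisc, mem_setOf_eq, Metric.mem_ball, dist_zero_right]
    exact (Real.lt_sqrt (norm_nonneg z)).symm
  rw [h, Complex.volume_ball, ← ENNReal.ofReal_pow (Real.sqrt_nonneg d), Real.sq_sqrt hd]

private lemma volume_Adisc_ne_top (d : ℝ) : volume (Adisc d) ≠ ⊤ := by
  have h1 : Adisc d ⊆ Adisc (max d 0) := fun z hz =>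
    show ‖z‖ ^ 2 < max d 0 from lt_of_lt_of_le hz (le_max_left _ _)
  refine ne_top_of_le_ne_top ?_ (measure_mono h1)
  rw [volume_Adisc (le_max_right d 0)]
  exact ENNReal.mul_ne_top ENNReal.ofReal_ne_top ENNReal.coe_ne_top

private lemma volume_compl_Adisc (c : ℝ) : volume ((Adisc c)ᶜ) = ⊤ := by
  rw [measure_compl (measurableSet_Adisc c) (volume_Adisc_ne_top c),
    measure_univ_of_isAddLeftInvariant]
  exact ENNReal.top_sub (volume_Adisc_ne_top c)

private lemma lt_fC_iff {a : ℝ} (ha : 0 < a) (z : ℂ) :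
    a < (1 + ‖z‖ ^ 2)⁻¹ ↔ ‖z‖ ^ 2 < a⁻¹ - 1 := by
  have hpos : (0:ℝ) < 1 + ‖z‖ ^ 2 := by positivity
  rw [lt_inv_comm₀ ha hpos]
  exact lt_sub_iff_add_lt'.symm

private lemma fC_le_iff {b : ℝ} (hb : 0 < b) (z : ℂ) :
    (1 + ‖z‖ ^ 2)⁻¹ ≤ b ↔ b⁻¹ - 1 ≤ ‖z‖ ^ 2 := by
  have hpos : (0:ℝ) < 1 + ‖z‖ ^ 2 := by positivity
  rw [inv_le_comm₀ hpos hb]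
  exact sub_le_iff_le_add'.symm

private lemma preimage_Ioc_pos {a b : ℝ} (ha : 0 < a) (hb : 0 < b) :
    (fun z : ℂ => (1 + ‖z‖ ^ 2)⁻¹) ⁻¹' Ioc a b
      = Adisc (a⁻¹ - 1) \ Adisc (max (b⁻¹ - 1) 0) := by
  ext z
  have hu : (0:ℝ) ≤ ‖z‖ ^ 2 := by positivity
  simp only [mem_preimage, mem_Ioc, Adisc, mem_diff, mem_setOf_eq, not_lt, max_le_iff,
    lt_fC_iff ha, fC_le_iff hb]
  tauto

private lemma preimage_Ioc_nonpos {a b : ℝ} (ha : a ≤ 0) (hb : 0 < b) :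
    (fun z : ℂ => (1 + ‖z‖ ^ 2)⁻¹) ⁻¹' Ioc a b = (Adisc (max (b⁻¹ - 1) 0))ᶜ := by
  ext z
  have hu : (0:ℝ) ≤ ‖z‖ ^ 2 := by positivity
  have hlt : a < (1 + ‖z‖ ^ 2)⁻¹ := lt_of_le_of_lt ha (by positivity)
  simp only [mem_preimage, mem_Ioc, mem_compl_iff, Adisc, mem_setOf_eq, not_lt, max_le_iff,
    fC_le_iff hb]
  tauto

private lemma preimage_Ioc_bneg {a b : ℝ} (hb : b ≤ 0) :
    (fun z : ℂ => (1 + ‖z‖ ^ 2)⁻¹) ⁻¹' Ioc a b = (∅ : Set ℂ) := by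
  ext z
  simp only [mem_preimage, mem_Ioc, mem_empty_iff_false, iff_false, not_and, not_le]
  intro _
  exact lt_of_le_of_lt hb (by positivity)

private lemma preimage_Ioc_one_le {a b : ℝ} (ha : 1 ≤ a) :
    (fun z : ℂ => (1 + ‖z‖ ^ 2)⁻¹) ⁻¹' Ioc a b = (∅ : Set ℂ) := by
  ext z
  have h1 : (1 + ‖z‖ ^ 2)⁻¹ ≤ 1 := by
    refine (fC_le_iff one_pos z).2 ?_
    norm_num
  simp only [mem_preimage, mem_Ioc, mem_empty_iff_false, iff_false, not_and, not_le]
  intro h2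
  linarith

private lemma volume_Adisc_diff {c d : ℝ} (h0 : 0 ≤ c) (hcd : c ≤ d) :
    volume (Adisc d \ Adisc c) = ENNReal.ofReal (d - c) * NNReal.pi := by
  have hsub : Adisc c ⊆ Adisc d := fun z hz =>
    show ‖z‖ ^ 2 < d from lt_of_lt_of_le hz hcd
  rw [measure_diff hsub
      (measurableSet_Adisc c).nullMeasurableSet (volume_Adisc_ne_top c),
    volume_Adisc (h0.trans hcd), volume_Adisc h0,
    ← ENNReal.sub_mul (fun _ _ => ENNReal.coe_ne_top), ← ENNReal.ofReal_sub _ h0]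

private lemma lintegral_Ioo_density {a b : ℝ} (ha : 0 < a) (hab : a ≤ b) :
    ∫⁻ t in Ioo a b, ENNReal.ofReal (2 * π * t⁻¹ ^ 2)
      = ENNReal.ofReal (2 * π * (a⁻¹ - b⁻¹)) := by
  have hcont : ContinuousOn (fun t : ℝ => 2 * π * t⁻¹ ^ 2) (Icc a b) := by
    apply ContinuousOn.mul continuousOn_const
    exact (ContinuousOn.inv₀ continuousOn_id fun t ht => (lt_of_lt_of_le ha ht.1).ne').pow 2
  have hint : IntegrableOn (fun t : ℝ => 2 * π * t⁻¹ ^ 2) (Ioo a b) volume :=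
    (hcont.integrableOn_Icc).mono_set Ioo_subset_Icc_self
  rw [← ofReal_integral_eq_lintegral_ofReal hint
      (Filter.Eventually.of_forall fun t => by positivity)]
  congr 1
  have h1 : ∫ t in Ioo a b, 2 * π * t⁻¹ ^ 2 = ∫ t in a..b, 2 * π * t⁻¹ ^ 2 := by
    rw [intervalIntegral.integral_of_le hab, integral_Ioc_eq_integral_Ioo]
  rw [h1, intervalIntegral.integral_const_mul]
  rw [show (fun t : ℝ => t⁻¹ ^ 2) = (fun t : ℝ => t ^ (-2 : ℤ)) from funext fun t => by
    rw [inv_pow, ← zpow_natCast, ← zpow_neg]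
    norm_num]
  rw [integral_zpow (Or.inr ⟨by norm_num,
      notMem_uIcc_of_lt ha (lt_of_lt_of_le ha hab)⟩)]
  rw [show (-2 + 1 : ℤ) = -1 by norm_num, zpow_neg_one, zpow_neg_one]
  push_cast
  ring

private lemma lintegral_Ioo_zero_top {m : ℝ} (hm : 0 < m) :
    ∫⁻ t in Ioo (0:ℝ) m, ENNReal.ofReal (2 * π * t⁻¹ ^ 2) = ⊤ := by
  refine ENNReal.eq_top_of_forall_nnreal_le fun r => ?_
  set n : ℕ := ⌈(r : ℝ) * m⌉₊ with hn
  have hε : (0:ℝ) < m / (n + 2) := by positivity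
  have hεm : m / (n + 2) ≤ m := by
    apply div_le_self hm.le
    have : (0:ℝ) ≤ (n:ℝ) := Nat.cast_nonneg n
    linarith
  have hsub : Ioo (m / (n + 2)) m ⊆ Ioo 0 m := fun x hx => ⟨lt_trans hε hx.1, hx.2⟩
  have h1 : (m / (n + 2))⁻¹ - m⁻¹ = ((n:ℝ) + 1) / m := by
    rw [inv_div]
    field_simp
    ring
  have hrm : (r : ℝ) * m ≤ (n:ℝ) + 1 := le_trans (Nat.le_ceil _) (by rw [← hn]; linarith)
  have hdiv : (r : ℝ) ≤ ((n:ℝ) + 1) / m := (le_div_iff₀ hm).2 hrm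
  have hpi : (1:ℝ) ≤ 2 * π := by nlinarith [Real.pi_gt_three]
  have hq : (0:ℝ) ≤ ((n:ℝ) + 1) / m := by positivity
  calc (r : ℝ≥0∞) = ENNReal.ofReal r := ENNReal.ofReal_coe_nnreal.symm
    _ ≤ ENNReal.ofReal (2 * π * ((m / (n + 2))⁻¹ - m⁻¹)) := by
        refine ENNReal.ofReal_le_ofReal ?_
        rw [h1]
        nlinarith
    _ = ∫⁻ t in Ioo (m / (n + 2)) m, ENNReal.ofReal (2 * π * t⁻¹ ^ 2) :=
        (lintegral_Ioo_density hε hεm).symm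
    _ ≤ _ := lintegral_mono_set hsub

private lemma nu_apply (s : Set ℝ) (hs : MeasurableSet s) :
    volume.withDensity (fun t : ℝ =>
        if t ∈ Ioo (0:ℝ) 1 then ENNReal.ofReal (2 * π * t⁻¹ ^ 2) else 0) s
      = ∫⁻ t in s ∩ Ioo (0:ℝ) 1, ENNReal.ofReal (2 * π * t⁻¹ ^ 2) := by
  rw [withDensity_apply _ hs]
  have h : (fun t : ℝ => if t ∈ Ioo (0:ℝ) 1 then ENNReal.ofReal (2 * π * t⁻¹ ^ 2) else 0)
      = fun t => (Ioo (0:ℝ) 1).indicator (fun t => ENNReal.ofReal (2 * π * t⁻¹ ^ 2)) t := by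
    ext t
    rw [Set.indicator_apply]
  rw [h, lintegral_indicator measurableSet_Ioo _,
    Measure.restrict_restrict measurableSet_Ioo, Set.inter_comm]

private lemma hpi_coe : (NNReal.pi : ℝ≥0∞) = ENNReal.ofReal π := by
  rw [← NNReal.coe_real_pi, ENNReal.ofReal_coe_nnreal]

theorem stmt_14 :
    Measure.map (fun z : ℂ => (1 + ‖z‖ ^ 2)⁻¹)
        ((2 : ℝ≥0∞) • (volume : Measure ℂ)) =
      volume.withDensity (fun t : ℝ =>
        if t ∈ Set.Ioo (0 : ℝ) 1 then
          ENNReal.ofReal (2 * π * t⁻¹ ^ 2)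
        else 0) := by
  have hmf : Measurable (fun z : ℂ => (1 + ‖z‖ ^ 2)⁻¹) :=
    ((continuous_const.add (continuous_norm.pow 2)).inv₀
      (fun z => (by positivity : (0:ℝ) < 1 + ‖z‖ ^ 2).ne')).measurable
  refine Measure.ext_of_generateFrom_of_iUnion
      {S : Set ℝ | ∃ l u, l < u ∧ Ioc l u = S}
      (fun k => if Even k then Ioc (-(k:ℝ) - 1) 0 else Ioc ((k:ℝ) + 1)⁻¹ ((k:ℝ) + 1))
      (BorelSpace.measurable_eq.trans (borel_eq_generateFrom_Ioc ℝ)) ?_ ?_ ?_ ?_ ?_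
  · simpa using isPiSystem_Ioc (id : ℝ → ℝ) (id : ℝ → ℝ)
  · ext x
    simp only [mem_iUnion, mem_univ, iff_true]
    rcases le_or_gt x 0 with hx | hx
    · refine ⟨2 * ⌈-x⌉₊, ?_⟩
      rw [if_pos (even_two_mul _)]
      have h1 : -x ≤ (⌈-x⌉₊ : ℝ) := Nat.le_ceil _
      constructor
      · push_cast
        linarith
      · exact hx
    · refine ⟨2 * ⌈x + x⁻¹⌉₊ + 1, ?_⟩
      rw [if_neg (by simp [parity_simps])]
      have h1 : x + x⁻¹ ≤ (⌈x + x⁻¹⌉₊ : ℝ) := Nat.le_ceil _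
      have hx' : 0 < x⁻¹ := inv_pos.2 hx
      have hc : (0:ℝ) < ((2 * ⌈x + x⁻¹⌉₊ + 1 : ℕ) : ℝ) + 1 := by positivity
      constructor
      · rw [inv_lt_comm₀ hc hx]
        push_cast
        linarith
      · push_cast
        linarith
  · intro k
    by_cases he : Even k
    · rw [if_pos he]
      exact ⟨-(k:ℝ) - 1, 0, by
        constructor
        · have : (0:ℝ) ≤ (k:ℝ) := Nat.cast_nonneg k
          linarith
        · rfl⟩
    · rw [if_neg he]
      refine ⟨((k:ℝ) + 1)⁻¹, (k:ℝ) + 1, ?_, rfl⟩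
      have hk : 1 ≤ k := Nat.one_le_iff_ne_zero.2 (by rintro rfl; exact he Even.zero)
      have hk' : (1:ℝ) ≤ (k:ℝ) := by exact_mod_cast hk
      have hpos : (0:ℝ) < (k:ℝ) + 1 := by positivity
      have h1 : ((k:ℝ) + 1)⁻¹ ≤ 1 := by
        rw [inv_le_one_iff₀]
        right
        linarith
      linarith
  · intro k
    by_cases he : Even k
    · rw [if_pos he, Measure.map_apply hmf measurableSet_Ioc, preimage_Ioc_bneg le_rfl]
      simp
    · rw [if_neg he, Measure.map_apply hmf measurableSet_Ioc,
        preimage_Ioc_pos (by positivity) (by positivity), Measure.smul_apply, smul_eq_mul]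
      refine ENNReal.mul_ne_top ENNReal.ofNat_ne_top ?_
      exact ne_top_of_le_ne_top (volume_Adisc_ne_top _) (measure_mono diff_subset)
  · rintro s ⟨a, b, hab, rfl⟩
    rw [Measure.map_apply hmf measurableSet_Ioc, Measure.smul_apply, smul_eq_mul,
      nu_apply _ measurableSet_Ioc]
    rcases le_or_gt b 0 with hb | hb
    · rw [preimage_Ioc_bneg hb]
      have h : Ioc a b ∩ Ioo (0:ℝ) 1 = ∅ := by
        ext t
        simp only [mem_inter_iff, mem_Ioc, mem_Ioo, mem_empty_iff_false, iff_false, not_and]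
        intro h1 h2 h3
        linarith
      rw [h]
      simp
    · rcases le_or_gt (1:ℝ) a with ha1 | ha1
      · rw [preimage_Ioc_one_le ha1]
        have h : Ioc a b ∩ Ioo (0:ℝ) 1 = ∅ := by
          ext t
          simp only [mem_inter_iff, mem_Ioc, mem_Ioo, mem_empty_iff_false, iff_false, not_and]
          intro h1 h2 h3
          linarith
        rw [h]
        simp
      · rcases le_or_gt a 0 with ha0 | ha0
        · -- a ≤ 0 < b : both sides infinite
          rw [preimage_Ioc_nonpos ha0 hb, volume_compl_Adisc, ENNReal.mul_top two_ne_zero]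
          have hm : (0:ℝ) < min b 1 := lt_min hb one_pos
          have hsub : Ioo (0:ℝ) (min b 1) ⊆ Ioc a b ∩ Ioo (0:ℝ) 1 := by
            intro x hx
            simp only [mem_Ioo] at hx
            simp only [mem_inter_iff, mem_Ioc, mem_Ioo]
            exact ⟨⟨lt_of_le_of_lt ha0 hx.1, le_of_lt (lt_of_lt_of_le hx.2 (min_le_left _ _))⟩,
              hx.1, lt_of_lt_of_le hx.2 (min_le_right _ _)⟩
          exact (top_le_iff.1 ((lintegral_Ioo_zero_top hm) ▸ lintegral_mono_set hsub)).symm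
        · -- 0 < a < 1
          set m := min b 1 with hm
          have ham : a < m := lt_min hab ha1
          have hset : (Ioc a b ∩ Ioo (0:ℝ) 1 : Set ℝ) =ᵐ[volume] Ioo a m := by
            refine MeasureTheory.ae_eq_set.2 ⟨?_, ?_⟩
            · refine measure_mono_null (fun x hx => ?_) (measure_singleton m)
              obtain ⟨⟨h1, h2⟩, h3⟩ := hx
              simp only [mem_inter_iff, mem_Ioo, not_and, not_lt] at h3
              obtain ⟨h4, h5⟩ := h2
              have h6 : x ≤ m := le_min h1.2 h5.le
              have h7 : m ≤ x := h3 h1.1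
              simp [le_antisymm h6 h7]
            · have hsub2 : Ioo a m ⊆ Ioc a b ∩ Ioo (0:ℝ) 1 := by
                intro x hx
                simp only [mem_Ioo] at hx
                simp only [mem_inter_iff, mem_Ioc, mem_Ioo]
                exact ⟨⟨hx.1, le_of_lt (lt_of_lt_of_le hx.2 (min_le_left _ _))⟩,
                  lt_trans ha0 hx.1, lt_of_lt_of_le hx.2 (min_le_right _ _)⟩
              rw [diff_eq_empty.2 hsub2]
              simp
          rw [setLIntegral_congr hset, lintegral_Ioo_density ha0 ham.le,
            preimage_Ioc_pos ha0 hb]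
          have hc0 : (0:ℝ) ≤ max (b⁻¹ - 1) 0 := le_max_right _ _
          have hinv : b⁻¹ ≤ a⁻¹ := by
            apply inv_anti₀ ha0 hab.le
          have ha1' : (1:ℝ) ≤ a⁻¹ := (one_le_inv_iff₀).2 ⟨ha0, ha1.le⟩
          have hcd : max (b⁻¹ - 1) 0 ≤ a⁻¹ - 1 := by
            apply max_le <;> linarith
          rw [volume_Adisc_diff hc0 hcd]
          have hkey : a⁻¹ - 1 - max (b⁻¹ - 1) 0 = a⁻¹ - m⁻¹ := by
            rcases le_or_gt b 1 with hb1 | hb1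
            · have : (1:ℝ) ≤ b⁻¹ := (one_le_inv_iff₀).2 ⟨hb, hb1⟩
              rw [hm, min_eq_left hb1, max_eq_left (by linarith)]
              ring
            · have hbinv : b⁻¹ ≤ 1 := by
                rw [inv_le_one_iff₀]
                right
                exact hb1.le
              rw [hm, min_eq_right hb1.le, max_eq_right (by linarith)]
              norm_num
          have hma : m⁻¹ ≤ a⁻¹ := inv_anti₀ ha0 ham.le
          rw [hkey, hpi_coe]
          rw [show ((2:ℝ≥0∞)) = ENNReal.ofReal 2 by norm_num]
          rw [← ENNReal.ofReal_mul (sub_nonneg.2 hma),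
            ← ENNReal.ofReal_mul (by norm_num : (0:ℝ) ≤ 2)]
          congr 1
          ring
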